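/- For a finite cycle set S, there exists a positive integer d (the Dehornoy class) such that for every s ∈ S the element s^{[d]} = Π_d(s,...,s) is a diagonal matrix under the monomial representation, i.e., its permutation part is the identity. -/

import Mathlib

/-- Dehornoy's `Ω` expression: `Omega op k t` is `Ω_{k+1}(t 0, …, t k)`,
defined by `Ω_1(x) = x` and
`Ω_k(x_1,…,x_k) = Ω_{k-1}(x_1,…,x_{k-1}) * Ω_{k-1}(x_1,…,x_{k-2},x_k)`. -/
def Omega {S : Type*} (op : S → S → S) : (k : ℕ) → (Fin (k + 1) → S) → S
  | 0, t => t 0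
  | k + 1, t =>
      op (Omega op k fun i => t i.castSucc)
        (Omega op k fun i =>
          if i = Fin.last k then t (Fin.last (k + 1)) else t i.castSucc)

/-- Dehornoy's `Π` expression: `PiExpr op ι k t = ι(Ω_1(t_1)) ⋯ ι(Ω_k(t_1,…,t_k))`. -/
def PiExpr {S M : Type*} [Monoid M] (op : S → S → S) (ι : S → M) :
    (k : ℕ) → (Fin k → S) → M
  | 0, _ => 1
  | k + 1, t => PiExpr op ι k (fun i => t i.castSucc) * ι (Omega op k t)

/-- The defining relations of the structure monoid: `s (s*t) = t (t*s)`. -/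
def csRel {S : Type*} (op : S → S → S) (a b : FreeMonoid S) : Prop :=
  ∃ s t : S, a = FreeMonoid.of s * FreeMonoid.of (op s t) ∧
    b = FreeMonoid.of t * FreeMonoid.of (op t s)

/-- The structure monoid `⟨S ∣ s(s*t) = t(t*s)⟩⁺` of a cycle set. -/
abbrev StructureMonoid {S : Type*} (op : S → S → S) := (conGen (csRel op)).Quotient

/-- The canonical generators of the structure monoid. -/
def mkM {S : Type*} (op : S → S → S) (s : S) : StructureMonoid op :=
  (conGen (csRel op)).mk' (FreeMonoid.of s)

/-- The permutation matrix of `σ`: row `i` has a `1` in column `σ i`. -/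
def Pmat {ι : Type*} [DecidableEq ι] (R : Type*) [Semiring R] (σ : Equiv.Perm ι) :
    Matrix ι ι R := Matrix.of fun i j => if j = σ i then 1 else 0

/-- The diagonal matrix `D_s = diag(1,…,q,…,1)` with `q` in position `s`. -/
noncomputable def Dmat {S : Type*} [DecidableEq S] (s : S) : Matrix S S (Polynomial ℚ) :=
  Matrix.diagonal fun t => if t = s then Polynomial.X else 1

/-- The permutation `ψ(s) : t ↦ s * t` attached to an element of a cycle set. -/
noncomputable def psi {S : Type*} (op : S → S → S) (hbij : ∀ s : S, Function.Bijective (op s))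
    (s : S) : Equiv.Perm S := Equiv.ofBijective (op s) (hbij s)

/-- The monomial matrix `Θ(s) = D_s P_{ψ(s)}` associated to a generator. -/
noncomputable def theta {S : Type*} [Fintype S] [DecidableEq S] (op : S → S → S)
    (hbij : ∀ s : S, Function.Bijective (op s)) (s : S) : Matrix S S (Polynomial ℚ) :=
  Dmat s * Pmat (Polynomial ℚ) (psi op hbij s)

set_option linter.unusedSectionVars false

section DC

variable {S : Type*}

/-- The iterated permutation `π_k(s) = ψ(s) ; ψ(Ts) ; ⋯ ; ψ(T^{k-1}s)`. -/
noncomputable def DCpi (op : S → S → S) (hbij : ∀ s : S, Function.Bijective (op s)) :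
    ℕ → S → Equiv.Perm S
  | 0, _ => Equiv.refl S
  | k + 1, s => (DCpi op hbij k s).trans (psi op hbij ((fun x => op x x)^[k] s))

variable (op : S → S → S) (hbij : ∀ s : S, Function.Bijective (op s))

@[simp] lemma psi_apply (s t : S) : psi op hbij s t = op s t := rfl

lemma DCpi_succ' (k : ℕ) (s : S) :
    DCpi op hbij (k + 1) s = (psi op hbij s).trans (DCpi op hbij k (op s s)) := by
  induction k generalizing s with
  | zero => simp [DCpi]
  | succ k ih =>
    show (DCpi op hbij (k+1) s).trans _ = _
    rw [ih, Function.iterate_succ_apply]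
    rfl

lemma DC_key (hcs : ∀ s t u : S, op (op s t) (op s u) = op (op t s) (op t u)) :
    ∀ (k : ℕ) (s t x : S),
      op (DCpi op hbij k s t) (DCpi op hbij k s x) = DCpi op hbij k (op t s) (op t x) := by
  intro k
  induction k with
  | zero => intro s t x; rfl
  | succ k ih =>
    intro s t x
    rw [DCpi_succ', DCpi_succ']
    simp only [Equiv.trans_apply, psi_apply]
    rw [ih (op s s) (op s t) (op s x), hcs s t s, hcs s t x]

lemma DCpi_add (a b : ℕ) (s : S) :
    DCpi op hbij (a + b) s = (DCpi op hbij a s).trans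
      (DCpi op hbij b ((fun x => op x x)^[a] s)) := by
  induction b with
  | zero => simp [DCpi]
  | succ b ih =>
    have h : (fun x => op x x)^[a + b] s
        = (fun x => op x x)^[b] ((fun x => op x x)^[a] s) := by
      rw [Nat.add_comm, Function.iterate_add_apply]
    show (DCpi op hbij (a+b) s).trans (psi op hbij ((fun x => op x x)^[a+b] s)) = _
    rw [ih, h, Equiv.trans_assoc]
    rfl

lemma Omega_const (k : ℕ) (s : S) :
    Omega op k (fun _ => s) = (fun x => op x x)^[k] s := by
  induction k with
  | zero => rfl
  | succ k ih =>
    simp only [Omega, ite_self]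
    rw [ih, Function.iterate_succ_apply']

end DC

section Mat

variable {S : Type*} [Fintype S] [DecidableEq S]

lemma Pmat_refl : Pmat (Polynomial ℚ) (Equiv.refl S) = 1 := by
  ext i j
  simp [Pmat, Matrix.one_apply, eq_comm]

lemma Pmat_mul_Pmat (σ τ : Equiv.Perm S) :
    Pmat (Polynomial ℚ) σ * Pmat (Polynomial ℚ) τ = Pmat (Polynomial ℚ) (σ.trans τ) := by
  ext i j
  rw [Matrix.mul_apply]
  simp only [Pmat, Matrix.of_apply, Equiv.trans_apply]
  rw [Finset.sum_eq_single (σ i)]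
  · simp; congr
  · intro k _ hk; simp [hk]
  · intro h; exact absurd (Finset.mem_univ _) h

lemma Pmat_mul_diagonal (σ : Equiv.Perm S) (d : S → Polynomial ℚ) :
    Pmat (Polynomial ℚ) σ * Matrix.diagonal d =
      Matrix.diagonal (fun i => d (σ i)) * Pmat (Polynomial ℚ) σ := by
  ext i j
  rw [Matrix.mul_diagonal, Matrix.diagonal_mul]
  simp only [Pmat, Matrix.of_apply]
  split_ifs with h
  · rw [h, mul_comm]
  · simp

variable (op : S → S → S) (hbij : ∀ s : S, Function.Bijective (op s))
variable (Θ : StructureMonoid op →* Matrix S S (Polynomial ℚ))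

lemma theta_PiExpr (hΘ : ∀ s : S, Θ (mkM op s) = theta op hbij s) (k : ℕ) (s : S) :
    ∃ dv : S → Polynomial ℚ,
      Θ (PiExpr op (mkM op) k (fun _ => s)) =
        Matrix.diagonal dv * Pmat (Polynomial ℚ) (DCpi op hbij k s) := by
  induction k with
  | zero =>
    refine ⟨fun _ => 1, ?_⟩
    show Θ 1 = _
    rw [map_one]
    rw [show DCpi op hbij 0 s = Equiv.refl S from rfl, Pmat_refl, mul_one, Matrix.diagonal_one]
  | succ k ih =>
    obtain ⟨dv, hdv⟩ := ih
    set u := (fun x => op x x)^[k] s with hu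
    refine ⟨fun x => dv x * (if DCpi op hbij k s x = u then Polynomial.X else 1), ?_⟩
    have h1 : PiExpr op (mkM op) (k+1) (fun _ => s) =
        PiExpr op (mkM op) k (fun _ => s) * mkM op (Omega op k (fun _ => s)) := rfl
    rw [h1, map_mul, hdv, hΘ, Omega_const, theta, Dmat, ← hu]
    rw [mul_assoc (Matrix.diagonal dv), ← mul_assoc (Pmat (Polynomial ℚ) (DCpi op hbij k s)),
      Pmat_mul_diagonal, mul_assoc, Pmat_mul_Pmat, ← mul_assoc, Matrix.diagonal_mul_diagonal]
    rfl

end Mat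

section Comb

variable {S : Type*} [Fintype S] [DecidableEq S]
variable (op : S → S → S) (hbij : ∀ s : S, Function.Bijective (op s))

lemma trans_cancel (σ τ : Equiv.Perm S) (h : σ.trans τ = σ) : τ = Equiv.refl S := by
  ext y
  obtain ⟨x, rfl⟩ := σ.surjective y
  exact Equiv.ext_iff.mp h x

lemma DC_exists (hcs : ∀ s t u : S, op (op s t) (op s u) = op (op t s) (op t u)) :
    ∃ c : ℕ, 0 < c ∧ ∀ s : S, DCpi op hbij c s = Equiv.refl S := by
  classical
  obtain ⟨a, b, hab, hfab⟩ := Finite.exists_ne_map_eq_of_infinite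
    (fun k : ℕ => ((fun s : S => DCpi op hbij k s), (fun x => op x x)^[k]))
  wlog hlt : a < b generalizing a b
  · exact this b a hab.symm hfab.symm (by omega)
  have hπ : ∀ s, DCpi op hbij a s = DCpi op hbij b s :=
    fun s => congrFun (congrArg Prod.fst hfab) s
  set c := b - a with hc
  have hb : b = a + c := by omega
  have hcpos : 0 < c := by omega
  -- π_c is the identity on the image of T^[a]
  have h1 : ∀ s : S, DCpi op hbij c ((fun x => op x x)^[a] s) = Equiv.refl S := by
    intro s
    refine trans_cancel (DCpi op hbij a s) _ ?_
    rw [← DCpi_add, ← hb, ← hπ]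
  -- the set where π_c = 1 is closed under every op t
  have h2 : ∀ t u : S, DCpi op hbij c u = Equiv.refl S →
      DCpi op hbij c (op t u) = Equiv.refl S := by
    intro t u hu
    ext y
    obtain ⟨x, rfl⟩ := (hbij t).2 y
    have := DC_key op hbij hcs c u t x
    rw [hu] at this
    simpa using this.symm
  -- and hence closed under preimages of every op t
  have h3 : ∀ t u : S, DCpi op hbij c (op t u) = Equiv.refl S →
      DCpi op hbij c u = Equiv.refl S := by
    intro t u hu
    set σ := psi op hbij t with hσ
    have hfwd : ∀ (n : ℕ) (v : S), DCpi op hbij c v = Equiv.refl S →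
        DCpi op hbij c ((σ ^ n) v) = Equiv.refl S := by
      intro n
      induction n with
      | zero => intro v hv; simpa using hv
      | succ n ih =>
        intro v hv
        rw [pow_succ, Equiv.Perm.mul_apply]
        exact ih _ (h2 t v hv)
    have hm : 0 < orderOf σ := orderOf_pos σ
    have := hfwd (orderOf σ - 1) (op t u) hu
    rw [show (op t u) = σ u from rfl, ← Equiv.Perm.mul_apply, ← pow_succ,
      Nat.sub_add_cancel hm, pow_orderOf_eq_one, Equiv.Perm.one_apply] at this
    exact this
  -- backward closure along T
  have h4 : ∀ (n : ℕ) (u : S), DCpi op hbij c ((fun x => op x x)^[n] u) = Equiv.refl S →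
      DCpi op hbij c u = Equiv.refl S := by
    intro n
    induction n with
    | zero => intro u hu; exact hu
    | succ n ih =>
      intro u hu
      rw [Function.iterate_succ_apply] at hu
      exact h3 u u (ih _ hu)
  exact ⟨c, hcpos, fun s => h4 a s (h1 s)⟩

end Comb


/-- Existence of the Dehornoy class: for a finite cycle set there is a positive integer
`d` such that for every `s`, the element `s^{[d]} = Π_d(s,…,s)` is diagonal under the
monomial representation. -/
theorem exists_dehornoy_class {S : Type*} [Fintype S] [DecidableEq S] (op : S → S → S)
    (hbij : ∀ s : S, Function.Bijective (op s))
    (hcs : ∀ s t u : S, op (op s t) (op s u) = op (op t s) (op t u))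
    (Θ : StructureMonoid op →* Matrix S S (Polynomial ℚ))
    (hΘ : ∀ s : S, Θ (mkM op s) = theta op hbij s) :
    ∃ d : ℕ, 0 < d ∧ ∀ s : S, ∃ dvec : S → Polynomial ℚ,
      Θ (PiExpr op (mkM op) d (fun _ => s)) = Matrix.diagonal dvec := by
  obtain ⟨c, hcpos, hc⟩ := DC_exists op hbij hcs
  refine ⟨c, hcpos, fun s => ?_⟩
  obtain ⟨dv, hdv⟩ := theta_PiExpr op hbij Θ hΘ c s
  refine ⟨dv, ?_⟩
  rw [hdv, hc s, Pmat_refl, mul_one]
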